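/- Let T be a cartesian monad on a cartesian category C with terminal object, and let K be a T-operad such that every component k_X : KX → TX of the associated cartesian natural transformation k : K ⇒ T is an epimorphism. Then the functor from T-algebras to K-algebras given by precomposition with k (sending a T-algebra θ : TX → X to θ ∘ k_X : KX → X) is full, faithful, and injective on objects. -/

import Mathlib

/-!
STATEMENT 3: Let `T` be a cartesian monad on a cartesian category `C` with terminal
object, and let `K` be a `T`-operad (equivalently, a monad `K` together with a
cartesian monad map `k : K ⟶ T`) such that every component `k_X : K X ⟶ T X` is an
epimorphism.  Then the functor from `T`-algebras to `K`-algebras given by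
precomposition with `k` (sending an algebra `θ : T X ⟶ X` to `θ ∘ k_X : K X ⟶ X`)
is full, faithful, and injective on objects.
-/

open CategoryTheory CategoryTheory.Limits

universe v u

theorem operad_algebras_contain_T_algebras
    {C : Type u} [Category.{v} C] [HasPullbacks C] [HasTerminal C]
    (T K : Monad C)
    -- `T` is a cartesian monad:
    [PreservesLimitsOfShape WalkingCospan T.toFunctor]
    (hTη : ∀ {X Y : C} (f : X ⟶ Y), IsPullback (T.η.app X) f (T.map f) (T.η.app Y))
    (hTμ : ∀ {X Y : C} (f : X ⟶ Y),
      IsPullback (T.μ.app X) (T.map (T.map f)) (T.map f) (T.μ.app Y))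
    -- `K` is a `T`-operad, i.e. a monad equipped with a cartesian map of monads to `T`:
    (k : K ⟶ T)
    (hk : ∀ {X Y : C} (f : X ⟶ Y), IsPullback (k.app X) (K.map f) (T.map f) (k.app Y))
    -- every component of `k` is an epimorphism:
    (hepi : ∀ X : C, Epi (k.app X)) :
    (Monad.algebraFunctorOfMonadHom k).Full ∧
      (Monad.algebraFunctorOfMonadHom k).Faithful ∧
      Function.Injective (Monad.algebraFunctorOfMonadHom k).obj := by
  refine ⟨⟨?_⟩, ⟨?_⟩, ?_⟩
  · intro A B f
    refine ⟨⟨f.f, ?_⟩, ?_⟩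
    · have hf := f.h
      change K.map (X := A.A) (Y := B.A) f.f ≫ k.app B.A ≫ B.a = CategoryStruct.comp (X := K.obj A.A) (Y := A.A) (Z := B.A) (k.app A.A ≫ A.a) f.f at hf
      change T.map (X := A.A) (Y := B.A) f.f ≫ B.a = CategoryStruct.comp (X := T.obj A.A) (Y := A.A) (Z := B.A) A.a f.f
      haveI := hepi A.A
      rw [← cancel_epi (k.app A.A)]
      have hnat : k.app A.A ≫ T.map f.f = K.toFunctor.map f.f ≫ k.app B.A :=
        (k.toNatTrans.naturality f.f).symm
      exact (Category.assoc _ _ _).symm.trans ((congrArg (· ≫ B.a) hnat).trans ((Category.assoc _ _ _).trans (hf.trans (Category.assoc _ _ _))))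
    · ext; rfl
  · intro A B f g h
    ext
    have h' : ((Monad.algebraFunctorOfMonadHom k).map f).f
        = ((Monad.algebraFunctorOfMonadHom k).map g).f := by rw [h]
    exact h'
  · intro A B h
    obtain ⟨XA, θA, _, _⟩ := A
    obtain ⟨XB, θB, _, _⟩ := B
    dsimp [Monad.algebraFunctorOfMonadHom] at h
    injection h with h1 h2
    subst h1
    haveI := hepi XA
    have : θA = θB := by
      rw [← cancel_epi (k.app XA)]
      exact eq_of_heq h2
    subst this
    rfl
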